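/- Let F be an increasing homeomorphism of ℝ with F(0)=0, F(x+1) = F(x) + m for an integer m > 1, and suppose F is UAA: there is a constant M ≥ 1 with 1/M ≤ (F^{−n}(x+y) − F^{−n}(x))/(F^{−n}(x) − F^{−n}(x−y)) ≤ M for all n ≥ 1, x ∈ ℝ, y > 0. Then there exists a homeomorphism H of ℝ with H(0)=0, H(x+1) = H(x)+1, and H(mx) = F(H(x)) for all x, defined on the dense set {j/m^n} by H(j/m^n) = a_{j,n} where F^n(a_{j,n}) = j. -/

import Mathlib

/-- Existence of the conjugacy H with H(0)=0, H(x+1)=H(x)+1 and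
H(mx)=F(H(x)), with H(j/m^n) = a_{j,n} where F^n(a_{j,n}) = j, for a UAA circle
endomorphism lift F. -/
theorem stmt13 (m : ℕ) (hm : 1 < m) (F : ℝ → ℝ)
    (Fmono : StrictMono F) (Fcont : Continuous F) (Fsurj : Function.Surjective F)
    (F0 : F 0 = 0) (Fcomm : ∀ x : ℝ, F (x + 1) = F x + m)
    (M : ℝ) (hM : 1 ≤ M)
    (hUAA : ∀ n : ℕ, 1 ≤ n → ∀ x y : ℝ, 0 < y →
      1 / M ≤ (Function.invFun (F^[n]) (x + y) - Function.invFun (F^[n]) x) /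
              (Function.invFun (F^[n]) x - Function.invFun (F^[n]) (x - y)) ∧
      (Function.invFun (F^[n]) (x + y) - Function.invFun (F^[n]) x) /
        (Function.invFun (F^[n]) x - Function.invFun (F^[n]) (x - y)) ≤ M) :
    ∃ H : ℝ → ℝ, StrictMono H ∧ Continuous H ∧ Function.Surjective H ∧
      H 0 = 0 ∧ (∀ x : ℝ, H (x + 1) = H x + 1) ∧
      (∀ x : ℝ, H (m * x) = F (H x)) ∧
      (∀ n : ℕ, 1 ≤ n → ∀ j : ℕ, j ≤ m ^ n →
        H ((j : ℝ) / (m : ℝ) ^ n) ∈ Set.Icc (0:ℝ) 1 ∧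
        F^[n] (H ((j : ℝ) / (m : ℝ) ^ n)) = j) := by
  have hm1 : (1:ℝ) < (m:ℝ) := by exact_mod_cast hm
  have hm0 : (0:ℝ) < (m:ℝ) := by linarith
  set g : ℝ → ℝ := ⇑(StrictMono.orderIsoOfSurjective F Fmono Fsurj).symm with hgdef
  have hgF : ∀ x, g (F x) = x := fun x =>
    StrictMono.orderIsoOfSurjective_symm_apply_self F Fmono Fsurj x
  have hFg : ∀ x, F (g x) = x := fun x =>
    StrictMono.orderIsoOfSurjective_self_symm_apply F Fmono Fsurj x
  have hgm : StrictMono g := (StrictMono.orderIsoOfSurjective F Fmono Fsurj).symm.strictMono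
  -- F on integer translates
  have hFint : ∀ k : ℤ, ∀ x : ℝ, F (x + k) = F x + k * m := by
    intro k
    induction k using Int.induction_on with
    | zero => simp
    | succ n ih => intro x
                   have h1 := Fcomm (x + n)
                   have h2 := ih x
                   push_cast at h1 h2 ⊢
                   rw [show x + ((n:ℝ) + 1) = x + n + 1 by ring, h1, h2]; ring
    | pred n ih => intro x
                   have h1 := Fcomm (x + (-(n:ℝ) - 1))
                   have h2 := ih x
                   push_cast at h1 h2 ⊢
                   rw [show x + (-(n:ℝ) - 1) + 1 = x + -(n:ℝ) by ring, h2] at h1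
                   linarith [h1]
  have hFj : ∀ k : ℤ, F k = k * m := by
    intro k; have := hFint k 0; simpa [F0] using this
  have hgint : ∀ k : ℤ, ∀ x : ℝ, g (x + k * m) = g x + k := by
    intro k x
    apply Fmono.injective
    rw [hFg, hFint k (g x), hFg]
  have hg0 : g 0 = 0 := by have := hgF 0; rwa [F0] at this
  have hgnm : ∀ n, StrictMono (g^[n]) := fun n => hgm.iterate n
  have hFgn : ∀ n x, F^[n] (g^[n] x) = x := by
    intro n
    exact Function.LeftInverse.iterate hFg n
  have hgFn : ∀ n x, g^[n] (F^[n] x) = x := by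
    intro n
    exact Function.LeftInverse.iterate hgF n
  have hFn_int : ∀ n : ℕ, ∀ k : ℤ, F^[n] (k : ℝ) = (k : ℝ) * (m:ℝ) ^ n := by
    intro n
    induction n with
    | zero => intro k; simp
    | succ n ih => intro k
                   rw [Function.iterate_succ_apply, hFj k]
                   have : ((k:ℝ) * m) = ((k * m : ℤ) : ℝ) := by push_cast; ring
                   rw [this, ih (k * m)]
                   push_cast; ring
  have hgn_int : ∀ n : ℕ, ∀ k : ℤ, g^[n] ((k : ℝ) * (m:ℝ) ^ n) = (k : ℝ) := by
    intro n k
    rw [← hFn_int n k, hgFn]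
  have hgn_add : ∀ n : ℕ, ∀ x : ℝ, g^[n] (x + (m:ℝ) ^ n) = g^[n] x + 1 := by
    intro n
    induction n with
    | zero => intro x; simp
    | succ n ih => intro x
                   rw [Function.iterate_succ_apply]
                   have h1 : x + (m:ℝ) ^ (n+1) = x + ((m^n : ℤ) : ℝ) * m := by push_cast; ring
                   rw [h1, hgint (m^n : ℤ) x]
                   have h2 : g x + ((m^n : ℤ):ℝ) = g x + (m:ℝ)^n := by push_cast; ring
                   rw [h2, ih (g x), Function.iterate_succ_apply]
  have ha_mul : ∀ n : ℕ, ∀ j : ℤ, g^[n+1] ((j:ℝ) * m) = g^[n] (j : ℝ) := by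
    intro n j
    rw [Function.iterate_succ_apply]
    have : g ((j:ℝ) * m) = (j:ℝ) := by
      have := hgint j 0; simpa [hg0] using this
    rw [this]
  have ha_pow : ∀ k n : ℕ, ∀ j : ℤ, g^[n+k] ((j:ℝ) * (m:ℝ)^k) = g^[n] (j:ℝ) := by
    intro k
    induction k with
    | zero => intro n j; simp
    | succ k ih => intro n j
                   have h1 : (j:ℝ) * (m:ℝ)^(k+1) = ((j * m^k : ℤ):ℝ) * m := by push_cast; ring
                   have h2 : n + (k+1) = (n + k) + 1 := by ring
                   rw [h1, h2, ha_mul (n+k) (j * m^k)]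
                   have h3 : ((j * m^k : ℤ):ℝ) = (j:ℝ) * (m:ℝ)^k := by push_cast; ring
                   rw [h3, ih n j]
  have ha_lt : ∀ n n' : ℕ, ∀ j j' : ℤ,
      g^[n] (j:ℝ) < g^[n'] (j':ℝ) ↔ (j:ℝ)/(m:ℝ)^n < (j':ℝ)/(m:ℝ)^n' := by
    intro n n' j j'
    rw [← ha_pow n' n j, ← ha_pow n n' j', Nat.add_comm n' n]
    rw [(hgnm (n+n')).lt_iff_lt]
    rw [div_lt_div_iff₀ (by positivity) (by positivity)]
  have ha_le : ∀ n n' : ℕ, ∀ j j' : ℤ,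
      g^[n] (j:ℝ) ≤ g^[n'] (j':ℝ) ↔ (j:ℝ)/(m:ℝ)^n ≤ (j':ℝ)/(m:ℝ)^n' := by
    intro n n' j j'
    rw [← not_lt, ← not_lt, ha_lt n' n j' j]

  have hinv : ∀ n : ℕ, ∀ x : ℝ, Function.invFun (F^[n]) x = g^[n] x := by
    intro n x
    have hinj : Function.Injective (F^[n]) := (Fmono.iterate n).injective
    apply hinj
    rw [hFgn n x]
    exact Function.invFun_eq ⟨g^[n] x, hFgn n x⟩
  have hMpos : (0:ℝ) < M := lt_of_lt_of_le one_pos hM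
  have hnb : ∀ n : ℕ, 1 ≤ n → ∀ j : ℤ,
      (g^[n] ((j:ℝ)+1) - g^[n] (j:ℝ) ≤ M * (g^[n] (j:ℝ) - g^[n] ((j:ℝ)-1))) ∧
      (g^[n] (j:ℝ) - g^[n] ((j:ℝ)-1) ≤ M * (g^[n] ((j:ℝ)+1) - g^[n] (j:ℝ))) := by
    intro n hn j
    obtain ⟨h1, h2⟩ := hUAA n hn (j:ℝ) 1 one_pos
    rw [hinv, hinv, hinv] at h1 h2
    have hD : 0 < g^[n] ((j:ℝ)) - g^[n] ((j:ℝ)-1) := sub_pos.2 ((hgnm n) (by linarith))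
    have hN : 0 < g^[n] ((j:ℝ)+1) - g^[n] (j:ℝ) := sub_pos.2 ((hgnm n) (by linarith))
    constructor
    · rw [div_le_iff₀ hD] at h2
      linarith
    · rw [div_le_div_iff₀ hMpos hD] at h1
      nlinarith [h1]
  have hMp1 : (0:ℝ) < M + 1 := by linarith
  have hlam0 : 0 ≤ M / (M+1) := by positivity
  have hlam1 : M / (M+1) < 1 := by rw [div_lt_one hMp1]; linarith
  have hlen : ∀ n : ℕ, ∀ j : ℤ, g^[n] ((j:ℝ)+1) - g^[n] (j:ℝ) ≤ (M/(M+1)) ^ n := by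
    intro n
    induction n with
    | zero => intro j; simp
    | succ n ih =>
      intro j
      have hm0' : (0:ℤ) < (m:ℤ) := by exact_mod_cast hm0
      obtain ⟨q, r, hqr, hr0, hrm⟩ : ∃ q r : ℤ, j = (m:ℤ) * q + r ∧ 0 ≤ r ∧ r < (m:ℤ) :=
        ⟨j / m, j % m, (Int.mul_ediv_add_emod j m).symm, Int.emod_nonneg j (by omega),
          Int.emod_lt_of_pos j hm0'⟩
      have hparent : g^[n+1] ((((m:ℤ) * (q+1) : ℤ)):ℝ) - g^[n+1] ((((m:ℤ) * q : ℤ)):ℝ)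
          ≤ (M/(M+1)) ^ n := by
        have e1 : ((((m:ℤ) * q : ℤ)):ℝ) = (q:ℝ) * m := by push_cast; ring
        have e2 : ((((m:ℤ) * (q+1) : ℤ)):ℝ) = (((q+1:ℤ)):ℝ) * m := by push_cast; ring
        rw [e1, e2, ha_mul n q, ha_mul n (q+1)]
        have e3 : (((q+1:ℤ)):ℝ) = (q:ℝ)+1 := by push_cast; ring
        rw [e3]; exact ih q
      have hmono := (hgnm (n+1)).monotone
      rw [pow_succ]
      -- goal : L j ≤ (M/(M+1))^n * (M/(M+1))
      rw [← mul_div_assoc, le_div_iff₀ hMp1]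
      have hd : (m:ℤ) * (q+1) = (m:ℤ) * q + m := by ring
      by_cases hcase : r + 1 < (m:ℤ)
      · -- use right neighbor j+1
        have h2 := (hnb (n+1) (by omega) (j+1)).2
        have e1 : (((j+1:ℤ)):ℝ) - 1 = (j:ℝ) := by push_cast; ring
        have e2 : (((j+1:ℤ)):ℝ) + 1 = (j:ℝ) + 2 := by push_cast; ring
        have e3 : (((j+1:ℤ)):ℝ) = (j:ℝ) + 1 := by push_cast; ring
        rw [e1, e2, e3] at h2
        -- containment
        have c1 : g^[n+1] ((((m:ℤ) * q : ℤ)):ℝ) ≤ g^[n+1] (j:ℝ) := by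
          apply hmono; exact_mod_cast by omega
        have c2 : g^[n+1] ((j:ℝ)+2) ≤ g^[n+1] ((((m:ℤ) * (q+1) : ℤ)):ℝ) := by
          apply hmono
          have : j + 2 ≤ (m:ℤ) * (q+1) := by omega
          exact_mod_cast this
        have hsum : (g^[n+1] ((j:ℝ)+1) - g^[n+1] (j:ℝ)) + (g^[n+1] ((j:ℝ)+2) - g^[n+1] ((j:ℝ)+1))
            ≤ (M/(M+1))^n := by linarith
        have hint := mul_le_mul_of_nonneg_left hsum hMpos.le
        linarith [h2, hint]
      · -- r = m - 1, use left neighbor j-1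
        have hr : r = (m:ℤ) - 1 := by omega
        have h2 := (hnb (n+1) (by omega) j).1
        have c1 : g^[n+1] ((((m:ℤ) * q : ℤ)):ℝ) ≤ g^[n+1] ((j:ℝ)-1) := by
          apply hmono
          have h' : (m:ℤ) * q ≤ j - 1 := by omega
          exact_mod_cast h'
        have c2 : g^[n+1] ((j:ℝ)+1) ≤ g^[n+1] ((((m:ℤ) * (q+1) : ℤ)):ℝ) := by
          apply hmono
          have : j + 1 ≤ (m:ℤ) * (q+1) := by omega
          exact_mod_cast this
        have hsum : (g^[n+1] ((j:ℝ)+1) - g^[n+1] (j:ℝ)) + (g^[n+1] (j:ℝ) - g^[n+1] ((j:ℝ)-1))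
            ≤ (M/(M+1))^n := by linarith
        have hint := mul_le_mul_of_nonneg_left hsum hMpos.le
        linarith [h2, hint]

  -- the m-adic point sets and the inverse conjugacy G
  set S : ℝ → Set ℝ := fun y => {d | ∃ n : ℕ, ∃ j : ℤ, d = (j:ℝ)/(m:ℝ)^n ∧ g^[n] (j:ℝ) ≤ y}
    with hSdef
  have hmem : ∀ (y : ℝ) (n : ℕ) (j : ℤ), g^[n] (j:ℝ) ≤ y → (j:ℝ)/(m:ℝ)^n ∈ S y :=
    fun y n j h => ⟨n, j, rfl, h⟩
  have hSne : ∀ y, (S y).Nonempty := by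
    intro y
    exact ⟨(⌊y⌋ : ℝ)/(m:ℝ)^0, 0, ⌊y⌋, rfl, by simpa using Int.floor_le y⟩
  have hSbdd : ∀ y, BddAbove (S y) := by
    intro y
    refine ⟨(⌊y⌋:ℝ) + 1, ?_⟩
    rintro d ⟨n, j, rfl, hj⟩
    have h1 : g^[n] (j:ℝ) ≤ g^[0] (((⌊y⌋+1 : ℤ)):ℝ) := by
      simp only [Function.iterate_zero, id_eq]
      push_cast
      linarith [Int.lt_floor_add_one y]
    have h2 := (ha_le n 0 j (⌊y⌋+1)).1 h1
    simp only [pow_zero, div_one] at h2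
    push_cast at h2 ⊢
    linarith
  set G : ℝ → ℝ := fun y => sSup (S y) with hGdef
  have hGa : ∀ (n : ℕ) (j : ℤ), G (g^[n] (j:ℝ)) = (j:ℝ)/(m:ℝ)^n := by
    intro n j
    apply le_antisymm
    · apply csSup_le (hSne _)
      rintro d ⟨n', j', rfl, hj'⟩
      exact (ha_le n' n j' j).1 hj'
    · exact le_csSup (hSbdd _) (hmem _ n j le_rfl)
  have hGmono : Monotone G := by
    intro y y' h
    apply csSup_le_csSup (hSbdd y') (hSne y)
    rintro d ⟨n, j, rfl, hj⟩
    exact ⟨n, j, rfl, hj.trans h⟩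
  have hGint : ∀ k : ℤ, G (k:ℝ) = k := by
    intro k
    have := hGa 0 k
    simpa using this
  have hdense : ∀ u v : ℝ, u < v →
      ∃ (n:ℕ) (j:ℤ), u < (j:ℝ)/(m:ℝ)^n ∧ (j:ℝ)/(m:ℝ)^n < v := by
    intro u v huv
    obtain ⟨n, hn⟩ := exists_pow_lt_of_lt_one (x := v - u) (y := 1/(m:ℝ)) (by linarith)
      (by rw [div_lt_one hm0]; exact hm1)
    have hpow : (0:ℝ) < (m:ℝ)^n := by positivity
    have h1 : (1/(m:ℝ))^n = 1/(m:ℝ)^n := by rw [one_div, one_div, inv_pow]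
    rw [h1] at hn
    have h2 : 1 < (v - u) * (m:ℝ)^n := (div_lt_iff₀ hpow).1 hn
    refine ⟨n, ⌊u * (m:ℝ)^n⌋ + 1, ?_, ?_⟩
    · rw [lt_div_iff₀ hpow]
      push_cast
      linarith [Int.lt_floor_add_one (u * (m:ℝ)^n)]
    · rw [div_lt_iff₀ hpow]
      push_cast
      nlinarith [Int.floor_le (u * (m:ℝ)^n)]
  have hGstrict : StrictMono G := by
    intro y y' hyy
    obtain ⟨n, hn⟩ := exists_pow_lt_of_lt_one (x := (y' - y)/2) (y := M/(M+1))
      (by linarith) hlam1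
    have Hbd : ∀ z : ℤ, y < g^[n] (z:ℝ) → ⌊y⌋ * (m:ℤ)^n ≤ z := by
      intro z hz
      have e : ((⌊y⌋ * (m:ℤ)^n : ℤ):ℝ) = (⌊y⌋:ℝ) * (m:ℝ)^n := by push_cast; ring
      have h1 : g^[n] ((((⌊y⌋ * (m:ℤ)^n : ℤ)):ℝ)) = (⌊y⌋:ℝ) := by
        rw [e]; exact hgn_int n ⌊y⌋
      have h2 : g^[n] ((((⌊y⌋ * (m:ℤ)^n : ℤ)):ℝ)) < g^[n] (z:ℝ) := by
        rw [h1]; exact lt_of_le_of_lt (Int.floor_le y) hz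
      have h3 := (hgnm n).lt_iff_lt.1 h2
      exact_mod_cast h3.le
    have Hinh : ∃ z : ℤ, y < g^[n] (z:ℝ) := by
      refine ⟨(⌊y⌋+1) * (m:ℤ)^n, ?_⟩
      have e : (((⌊y⌋+1) * (m:ℤ)^n : ℤ):ℝ) = ((⌊y⌋+1:ℤ):ℝ) * (m:ℝ)^n := by push_cast; ring
      rw [e, hgn_int n (⌊y⌋+1)]
      push_cast
      linarith [Int.lt_floor_add_one y]
    obtain ⟨j, hPj, hmin⟩ := Int.exists_least_of_bdd ⟨⌊y⌋ * (m:ℤ)^n, Hbd⟩ Hinh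
    have hj1 : g^[n] (((j-1 : ℤ)):ℝ) ≤ y := by
      by_contra hcon
      push_neg at hcon
      have := hmin (j-1) hcon
      omega
    have e1 : (((j-1 : ℤ)):ℝ) = (j:ℝ) - 1 := by push_cast; ring
    have hl1 := hlen n (j-1)
    rw [e1] at hl1 hj1
    have e2 : (j:ℝ) - 1 + 1 = (j:ℝ) := by ring
    rw [e2] at hl1
    have hl2 := hlen n j
    -- g^[n] (j+1) ≤ y'
    have hup : g^[n] ((j:ℝ)+1) ≤ y' := by linarith
    have hGy : G y ≤ (j:ℝ)/(m:ℝ)^n := by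
      apply csSup_le (hSne _)
      rintro d ⟨n', j', rfl, hj'⟩
      exact ((ha_lt n' n j' j).1 (lt_of_le_of_lt hj' hPj)).le
    have hGy' : ((j+1:ℤ):ℝ)/(m:ℝ)^n ≤ G y' := by
      apply le_csSup (hSbdd _)
      apply hmem
      have e3 : ((j+1:ℤ):ℝ) = (j:ℝ)+1 := by push_cast; ring
      rw [e3]; exact hup
    have hfrac : (j:ℝ)/(m:ℝ)^n < ((j+1:ℤ):ℝ)/(m:ℝ)^n := by
      apply div_lt_div_of_pos_right ?_ (by positivity)
      push_cast; linarith
    linarith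

  have hshift : ∀ (n:ℕ) (j:ℤ), g^[n] (((j + (m:ℤ)^n : ℤ)):ℝ) = g^[n] (j:ℝ) + 1 := by
    intro n j
    have e : (((j + (m:ℤ)^n : ℤ)):ℝ) = (j:ℝ) + (m:ℝ)^n := by push_cast; ring
    rw [e, hgn_add]
  have hG1 : ∀ y, G (y+1) = G y + 1 := by
    intro y
    apply le_antisymm
    · apply csSup_le (hSne _)
      rintro d ⟨n, j, rfl, hj⟩
      have h2 := hshift n (j - (m:ℤ)^n)
      rw [show j - (m:ℤ)^n + (m:ℤ)^n = j by ring] at h2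
      have hmem' : (((j - (m:ℤ)^n : ℤ)):ℝ)/(m:ℝ)^n ∈ S y := hmem y n _ (by linarith)
      have hle := le_csSup (hSbdd y) hmem'
      have e : (((j - (m:ℤ)^n : ℤ)):ℝ)/(m:ℝ)^n = (j:ℝ)/(m:ℝ)^n - 1 := by
        push_cast
        field_simp
      rw [e] at hle
      linarith
    · have h : G y ≤ G (y+1) - 1 := by
        apply csSup_le (hSne _)
        rintro d ⟨n, j, rfl, hj⟩
        have h2 := hshift n j
        have hmem' : (((j + (m:ℤ)^n : ℤ)):ℝ)/(m:ℝ)^n ∈ S (y+1) := hmem _ n _ (by linarith)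
        have hle := le_csSup (hSbdd (y+1)) hmem'
        have e : (((j + (m:ℤ)^n : ℤ)):ℝ)/(m:ℝ)^n = (j:ℝ)/(m:ℝ)^n + 1 := by
          push_cast
          field_simp
        rw [e] at hle
        linarith
      linarith
  have hGF : ∀ y, G (F y) = m * G y := by
    intro y
    apply le_antisymm
    · apply csSup_le (hSne _)
      rintro d ⟨n, j, rfl, hj⟩
      have h1 : g^[n+1] (j:ℝ) ≤ y := by
        rw [Function.iterate_succ_apply']
        have := hgm.monotone hj
        rwa [hgF] at this
      have hle := le_csSup (hSbdd y) (hmem y (n+1) j h1)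
      have e : (j:ℝ)/(m:ℝ)^n = m * ((j:ℝ)/(m:ℝ)^(n+1)) := by
        rw [pow_succ]
        field_simp
      rw [e]
      exact mul_le_mul_of_nonneg_left hle hm0.le
    · have h : G y ≤ G (F y) / m := by
        apply csSup_le (hSne _)
        rintro d ⟨n, j, rfl, hj⟩
        cases n with
        | zero =>
          have h1 : g^[0] ((((m:ℤ) * j : ℤ)):ℝ) ≤ F y := by
            simp only [Function.iterate_zero, id_eq] at hj ⊢
            have : ((((m:ℤ) * j : ℤ)):ℝ) = F (j:ℝ) := by rw [hFj j]; push_cast; ring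
            rw [this]
            exact Fmono.monotone hj
          have hle := le_csSup (hSbdd (F y)) (hmem (F y) 0 _ h1)
          simp only [pow_zero, div_one] at hle ⊢
          rw [le_div_iff₀ hm0]
          push_cast at hle ⊢
          linarith
        | succ n =>
          have h1 : g^[n] (j:ℝ) ≤ F y := by
            have e : F (g^[n+1] (j:ℝ)) = g^[n] (j:ℝ) := by
              rw [Function.iterate_succ_apply', hFg]
            rw [← e]
            exact Fmono.monotone hj
          have hle := le_csSup (hSbdd (F y)) (hmem (F y) n j h1)
          have e : (j:ℝ)/(m:ℝ)^(n+1) = ((j:ℝ)/(m:ℝ)^n)/m := by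
            rw [pow_succ, div_div]
          rw [e]
          exact (div_le_div_iff_of_pos_right hm0).2 hle
      have h2 := mul_le_mul_of_nonneg_left h hm0.le
      calc (m:ℝ) * G y ≤ m * (G (F y) / m) := h2
        _ = G (F y) := by field_simp
  have hG0 : G 0 = 0 := by
    have := hGint 0
    simpa using this
  have hGsurj : Function.Surjective G := by
    intro z
    have hAne : Set.Nonempty {t : ℝ | G t ≤ z} := by
      refine ⟨(⌊z⌋:ℝ), ?_⟩
      simp only [Set.mem_setOf_eq]
      rw [hGint ⌊z⌋]
      exact Int.floor_le z
    have hAbdd : BddAbove {t : ℝ | G t ≤ z} := by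
      refine ⟨(⌊z⌋:ℝ)+1, ?_⟩
      intro t ht
      simp only [Set.mem_setOf_eq] at ht
      have hGz : G ((⌊z⌋:ℝ)+1) = (⌊z⌋:ℝ)+1 := by
        have := hGint (⌊z⌋+1); push_cast at this ⊢; linarith [this]
      have : G t < G ((⌊z⌋:ℝ)+1) := by
        rw [hGz]; exact lt_of_le_of_lt ht (by linarith [Int.lt_floor_add_one z])
      exact (hGstrict.lt_iff_lt.1 this).le
    refine ⟨sSup {t : ℝ | G t ≤ z}, ?_⟩
    set y := sSup {t : ℝ | G t ≤ z} with hy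
    rcases lt_trichotomy (G y) z with h | h | h
    · obtain ⟨n, j, hd1, hd2⟩ := hdense (G y) z h
      have hp : G (g^[n] (j:ℝ)) = (j:ℝ)/(m:ℝ)^n := hGa n j
      have hpA : g^[n] (j:ℝ) ∈ {t : ℝ | G t ≤ z} := by
        simp only [Set.mem_setOf_eq]; rw [hp]; exact hd2.le
      have hple : g^[n] (j:ℝ) ≤ y := le_csSup hAbdd hpA
      have hcon := hGmono hple
      rw [hp] at hcon
      linarith
    · exact h
    · obtain ⟨n, j, hd1, hd2⟩ := hdense z (G y) h
      have hp : G (g^[n] (j:ℝ)) = (j:ℝ)/(m:ℝ)^n := hGa n j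
      have hub : g^[n] (j:ℝ) ∈ upperBounds {t : ℝ | G t ≤ z} := by
        intro t ht
        simp only [Set.mem_setOf_eq] at ht
        have : G t < G (g^[n] (j:ℝ)) := by rw [hp]; exact lt_of_le_of_lt ht hd1
        exact (hGstrict.lt_iff_lt.1 this).le
      have hyle : y ≤ g^[n] (j:ℝ) := csSup_le hAne hub
      have hcon := hGmono hyle
      rw [hp] at hcon
      linarith
  -- assemble H as the inverse of the order isomorphism G
  have hHG : ∀ y, (StrictMono.orderIsoOfSurjective G hGstrict hGsurj).symm (G y) = y :=
    fun y => StrictMono.orderIsoOfSurjective_symm_apply_self G hGstrict hGsurj y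
  have hGH : ∀ x, G ((StrictMono.orderIsoOfSurjective G hGstrict hGsurj).symm x) = x :=
    fun x => StrictMono.orderIsoOfSurjective_self_symm_apply G hGstrict hGsurj x
  set e := StrictMono.orderIsoOfSurjective G hGstrict hGsurj with hedef
  refine ⟨⇑e.symm, e.symm.strictMono, e.symm.continuous, e.symm.surjective, ?_, ?_, ?_, ?_⟩
  · have h := hHG 0
    rwa [hG0] at h
  · intro x
    have h1 : G (e.symm x + 1) = x + 1 := by rw [hG1, hGH]
    calc e.symm (x+1) = e.symm (G (e.symm x + 1)) := by rw [h1]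
      _ = e.symm x + 1 := hHG _
  · intro x
    have h1 : G (F (e.symm x)) = (m:ℝ) * x := by rw [hGF, hGH]
    calc e.symm ((m:ℝ)*x) = e.symm (G (F (e.symm x))) := by rw [h1]
      _ = F (e.symm x) := hHG _
  · intro n hn j hj
    have hcast : ((j:ℕ):ℝ)/(m:ℝ)^n = (((j:ℕ):ℤ):ℝ)/(m:ℝ)^n := by push_cast; ring
    have hH : e.symm (((j:ℕ):ℝ)/(m:ℝ)^n) = g^[n] ((((j:ℕ):ℤ)):ℝ) := by
      rw [hcast, ← hGa n ((j:ℕ):ℤ)]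
      exact hHG _
    rw [hH]
    have hgn0 : g^[n] ((0:ℝ)) = 0 := by
      have := hgn_int n 0
      simpa using this
    have hgn1 : g^[n] ((m:ℝ)^n) = 1 := by
      have := hgn_int n 1
      simpa using this
    refine ⟨⟨?_, ?_⟩, ?_⟩
    · rw [← hgn0]
      apply (hgnm n).monotone
      positivity
    · rw [← hgn1]
      apply (hgnm n).monotone
      have : ((j:ℕ):ℝ) ≤ ((m^n : ℕ):ℝ) := by exact_mod_cast hj
      push_cast at this ⊢
      linarith
    · have := hFgn n ((((j:ℕ):ℤ)):ℝ)
      rw [this]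
      push_cast
      ring
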